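/- Let φ be a 3-SAT formula and let R be the discrete instance constructed from φ as described. If R admits a partial contiguous allocation — pairwise disjoint sets of consecutive items, one per agent, not necessarily covering all items — in which every agent receives at least two items she values, then φ is satisfiable. -/
import Mathlib


/-- Satisfiability of the 3-SAT formula `φ` (`φ i k = (j, pol)` means the `k`-th literal
of clause `i` is `x_j` if `pol = true` and `¬ x_j` if `pol = false`). -/
def SatFormula (m n : ℕ) (φ : Fin m → Fin 3 → Fin n × Bool) : Prop :=
  ∃ a : Fin n → Bool, ∀ i : Fin m, ∃ k : Fin 3, a (φ i k).1 = (φ i k).2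

/-- Agents of the discrete instance `R` built from `φ`: clause agents `C_i^k = Sum.inl (i,k)`
and variable agents `X_j = Sum.inr (j, true)`, `X̄_j = Sum.inr (j, false)`. -/
abbrev RAgent (m n : ℕ) := (Fin m × Fin 3) ⊕ (Fin n × Bool)

/-- Number of clause-literal occurrences of the positive literal `x_j` in `φ`. -/
def posOcc (m n : ℕ) (φ : Fin m → Fin 3 → Fin n × Bool) (j : Fin n) : ℕ :=
  (Finset.univ.filter fun p : Fin m × Fin 3 => φ p.1 p.2 = (j, true)).card

/-- Number of clause-literal occurrences of the variable `x_j` (positive or negative). -/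
def occCount (m n : ℕ) (φ : Fin m → Fin 3 → Fin n × Bool) (j : Fin n) : ℕ :=
  (Finset.univ.filter fun p : Fin m × Fin 3 => (φ p.1 p.2).1 = j).card

/-- Item index at which the Variable-Gadget of variable `x_j` starts (the Variable-Gadget
of `x_j` has `5 + 2 * occCount` items and the gadgets follow the `4m` clause items). -/
def varStartR (m n : ℕ) (φ : Fin m → Fin 3 → Fin n × Bool) (j : Fin n) : ℕ :=
  4 * m + ∑ j' ∈ Finset.univ.filter (fun j' : Fin n => j' < j), (5 + 2 * occCount m n φ j')

/-- Rank (from the left) of the clause-literal occurrence `p` among the occurrences of the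
same literal, ordering occurrences by clause index and then literal position. -/
def litRank (m n : ℕ) (φ : Fin m → Fin 3 → Fin n × Bool) (p : Fin m × Fin 3) : ℕ :=
  (Finset.univ.filter fun p' : Fin m × Fin 3 =>
    φ p'.1 p'.2 = φ p.1 p.2 ∧ 3 * p'.1.val + p'.2.val < 3 * p.1.val + p.2.val).card

/-- Index of the first of the two items valued only by the clause agent `p` inside the
Variable-Gadget of its literal's variable. -/
def pairStart (m n : ℕ) (φ : Fin m → Fin 3 → Fin n × Bool) (p : Fin m × Fin 3) : ℕ :=
  if (φ p.1 p.2).2 then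
    varStartR m n φ (φ p.1 p.2).1 + 3 + 2 * litRank m n φ p
  else
    varStartR m n φ (φ p.1 p.2).1 + 4 + 2 * posOcc m n φ (φ p.1 p.2).1 + 2 * litRank m n φ p

/-- Valued sets of the instance `R` built from `φ` (with `4m` clause items followed by the
Variable-Gadgets, `10m + 5n` items in total): clause agent `C_i^k` values the 4 items of the
Clause-Gadget of `C_i` and its 2 items inside the Variable-Gadget of its literal's variable;
`X_j` values the items at offsets `0, 1, 2, 3 + 2·posOcc` of the Variable-Gadget of `x_j`,
and `X̄_j` those at offsets `0, 1, 3 + 2·posOcc, 4 + 2·occCount`. -/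
def RV (m n : ℕ) (φ : Fin m → Fin 3 → Fin n × Bool) :
    RAgent m n → Finset (Fin (10 * m + 5 * n))
  | .inl p => Finset.univ.filter fun t =>
      (4 * p.1.val ≤ t.val ∧ t.val < 4 * p.1.val + 4) ∨
      t.val = pairStart m n φ p ∨ t.val = pairStart m n φ p + 1
  | .inr (j, true) => Finset.univ.filter fun t =>
      t.val = varStartR m n φ j ∨ t.val = varStartR m n φ j + 1 ∨
      t.val = varStartR m n φ j + 2 ∨
      t.val = varStartR m n φ j + 3 + 2 * posOcc m n φ j
  | .inr (j, false) => Finset.univ.filter fun t =>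
      t.val = varStartR m n φ j ∨ t.val = varStartR m n φ j + 1 ∨
      t.val = varStartR m n φ j + 3 + 2 * posOcc m n φ j ∨
      t.val = varStartR m n φ j + 4 + 2 * occCount m n φ j
section Aux
variable (m n : ℕ) (φ : Fin m → Fin 3 → Fin n × Bool)

lemma sum_occCount : ∑ j : Fin n, occCount m n φ j = 3 * m := by
  classical
  have h := Finset.card_eq_sum_card_fiberwise
    (s := (Finset.univ : Finset (Fin m × Fin 3))) (t := (Finset.univ : Finset (Fin n)))
    (f := fun p => (φ p.1 p.2).1) (fun p _ => Finset.mem_univ _)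
  have : ∑ j : Fin n, occCount m n φ j
      = (Finset.univ : Finset (Fin m × Fin 3)).card := by
    rw [h]; rfl
  rw [this, Finset.card_univ]
  simp [mul_comm]

lemma varStart_add_le (j : Fin n) :
    varStartR m n φ j + 5 + 2 * occCount m n φ j ≤ 10 * m + 5 * n := by
  classical
  have hnotmem : j ∉ Finset.univ.filter (fun j' : Fin n => j' < j) := by simp
  have h1 : (5 + 2 * occCount m n φ j) +
      ∑ j' ∈ Finset.univ.filter (fun j' : Fin n => j' < j), (5 + 2 * occCount m n φ j')
      ≤ ∑ j' : Fin n, (5 + 2 * occCount m n φ j') := by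
    rw [← Finset.sum_insert (f := fun j' => 5 + 2 * occCount m n φ j') hnotmem]
    exact Finset.sum_le_sum_of_subset (Finset.subset_univ _)
  have h2 : ∑ j' : Fin n, (5 + 2 * occCount m n φ j') = 5 * n + 6 * m := by
    rw [Finset.sum_add_distrib, Finset.sum_const, Finset.card_univ, ← Finset.mul_sum,
      sum_occCount]
    simp [Fintype.card_fin]; ring
  unfold varStartR
  omega

lemma posOcc_le_occCount (j : Fin n) : posOcc m n φ j ≤ occCount m n φ j := by
  classical
  apply Finset.card_le_card
  intro p hp
  simp only [Finset.mem_filter, Finset.mem_univ, true_and] at hp ⊢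
  rw [hp]

lemma litRank_lt_pos (p : Fin m × Fin 3) (h : (φ p.1 p.2).2 = true) :
    litRank m n φ p < posOcc m n φ (φ p.1 p.2).1 := by
  classical
  apply Finset.card_lt_card
  constructor
  · intro p' hp'
    simp only [Finset.mem_filter, Finset.mem_univ, true_and] at hp' ⊢
    rw [hp'.1]
    exact Prod.ext rfl h
  · intro hsub
    have hp : p ∈ Finset.univ.filter
        (fun p' : Fin m × Fin 3 => φ p'.1 p'.2 = ((φ p.1 p.2).1, true)) := by
      simp only [Finset.mem_filter, Finset.mem_univ, true_and]
      exact Prod.ext rfl h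
    have := hsub hp
    simp only [Finset.mem_filter, Finset.mem_univ, true_and] at this
    omega

lemma posOcc_add_litRank_lt (p : Fin m × Fin 3) (h : (φ p.1 p.2).2 = false) :
    posOcc m n φ (φ p.1 p.2).1 + litRank m n φ p < occCount m n φ (φ p.1 p.2).1 := by
  classical
  set j := (φ p.1 p.2).1 with hj
  set A := Finset.univ.filter (fun p' : Fin m × Fin 3 => φ p'.1 p'.2 = (j, true)) with hA
  set B := Finset.univ.filter (fun p' : Fin m × Fin 3 =>
    φ p'.1 p'.2 = φ p.1 p.2 ∧ 3 * p'.1.val + p'.2.val < 3 * p.1.val + p.2.val) with hB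
  have hdisj : Disjoint A B := by
    rw [Finset.disjoint_left]
    intro q hqA hqB
    simp only [hA, hB, Finset.mem_filter, Finset.mem_univ, true_and] at hqA hqB
    have : (φ q.1 q.2).2 = true := by rw [hqA]
    rw [hqB.1, h] at this
    exact Bool.noConfusion this
  have hcard : posOcc m n φ j + litRank m n φ p = (A ∪ B).card :=
    (Finset.card_union_of_disjoint hdisj).symm
  rw [hcard]
  apply Finset.card_lt_card
  constructor
  · intro q hq
    simp only [Finset.mem_union, hA, hB, Finset.mem_filter, Finset.mem_univ, true_and] at hq ⊢
    rcases hq with hq | hq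
    · rw [hq]
    · rw [hq.1]
  · intro hsub
    have hp : p ∈ Finset.univ.filter (fun p' : Fin m × Fin 3 => (φ p'.1 p'.2).1 = j) := by
      simp [hj]
    have := hsub hp
    simp only [Finset.mem_union, hA, hB, Finset.mem_filter, Finset.mem_univ, true_and] at this
    rcases this with hc | hc
    · have : (φ p.1 p.2).2 = true := by rw [hc]
      rw [h] at this; exact Bool.noConfusion this
    · omega

end Aux
open Classical in
/-- If the discrete instance `R` built from the 3-SAT formula `φ` admits
a partial contiguous allocation (pairwise disjoint sets of consecutive items, one per agent,
not necessarily covering all items) in which every agent receives at least two items she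
values, then `φ` is satisfiable. -/
theorem satisfiable_of_partial_allocation
    (m n : ℕ) (hm : 0 < m) (hn : 0 < n)
    (φ : Fin m → Fin 3 → Fin n × Bool)
    (powner : Fin (10 * m + 5 * n) → Option (RAgent m n))
    (hcontig : ∀ (a : RAgent m n) (t₁ t₂ t₃ : Fin (10 * m + 5 * n)),
      t₁ ≤ t₂ → t₂ ≤ t₃ → powner t₁ = some a → powner t₃ = some a → powner t₂ = some a)
    (hval : ∀ a : RAgent m n,
      2 ≤ ((RV m n φ a).filter fun t => powner t = some a).card) :
    SatFormula m n φ := by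
  classical
  have hC : ∀ (a : RAgent m n) (x y z : ℕ) (hx : x < 10*m+5*n) (hy : y < 10*m+5*n)
      (hz : z < 10*m+5*n), x ≤ y → y ≤ z →
      powner ⟨x, hx⟩ = some a → powner ⟨z, hz⟩ = some a → powner ⟨y, hy⟩ = some a :=
    fun a x y z hx hy hz h1 h2 p1 p3 => hcontig a ⟨x,hx⟩ ⟨y,hy⟩ ⟨z,hz⟩ h1 h2 p1 p3
  have hvsle : ∀ j : Fin n, varStartR m n φ j + 5 + 2 * occCount m n φ j ≤ 10*m+5*n :=
    varStart_add_le m n φ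
  have hvsge : ∀ j : Fin n, 4 * m ≤ varStartR m n φ j := by
    intro j; unfold varStartR; exact Nat.le_add_right _ _
  have hposle : ∀ j, posOcc m n φ j ≤ occCount m n φ j := posOcc_le_occCount m n φ
  -- Step A
  have stepA : ∀ p : Fin m × Fin 3,
      2 ≤ (Finset.univ.filter (fun t : Fin (10*m+5*n) =>
          ((4*p.1.val ≤ t.val ∧ t.val < 4*p.1.val+4) ∧ powner t = some (Sum.inl p)))).card
      ∨ ∀ t : Fin (10*m+5*n),
          (t.val = pairStart m n φ p ∨ t.val = pairStart m n φ p + 1) →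
          powner t = some (Sum.inl p) := by
    intro p
    obtain ⟨t₁, t₂, ht₁, ht₂, hne⟩ := Finset.one_lt_card_iff.mp (hval (Sum.inl p))
    simp only [RV, Finset.mem_filter, Finset.mem_univ, true_and] at ht₁ ht₂
    obtain ⟨hv₁, ho₁⟩ := ht₁
    obtain ⟨hv₂, ho₂⟩ := ht₂
    have hmix : ∀ t u : Fin (10*m+5*n), t.val < 4*p.1.val+4 →
        (u.val = pairStart m n φ p ∨ u.val = pairStart m n φ p + 1) →
        powner t = some (Sum.inl p) → powner u = some (Sum.inl p) → False := by
      intro t u htv huv hot hou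
      have hjle := hvsle (φ p.1 p.2).1
      have hjge := hvsge (φ p.1 p.2).1
      have hple := hposle (φ p.1 p.2).1
      have ht4m : t.val < 4*m := by have := p.1.isLt; omega
      have hall : ∀ y (hy : y < 10*m+5*n), t.val ≤ y → y ≤ u.val →
          powner ⟨y, hy⟩ = some (Sum.inl p) := by
        intro y hy h1 h2
        exact hC _ t.val y u.val t.isLt hy u.isLt h1 h2 hot hou
      cases hb : (φ p.1 p.2).2
      · -- negative literal
        have hps : pairStart m n φ p = varStartR m n φ (φ p.1 p.2).1 + 4
            + 2 * posOcc m n φ (φ p.1 p.2).1 + 2 * litRank m n φ p := by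
          simp [pairStart, hb]
        have hrk := posOcc_add_litRank_lt m n φ p hb
        have hX := hval (Sum.inr ((φ p.1 p.2).1, true))
        have hsub : ((RV m n φ (Sum.inr ((φ p.1 p.2).1, true))).filter
            (fun t => powner t = some (Sum.inr ((φ p.1 p.2).1, true)))) ⊆ ∅ := by
          intro w hw
          simp only [RV, Finset.mem_filter, Finset.mem_univ, true_and] at hw
          obtain ⟨hwv, hwo⟩ := hw
          exfalso
          have hw' : powner ⟨w.val, w.isLt⟩ = some (Sum.inl p) := by
            apply hall w.val w.isLt
            · rcases hwv with h|h|h|h <;> omega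
            · rcases hwv with h|h|h|h <;> omega
          have := hwo.symm.trans hw'
          simp at this
        have hle := Finset.card_le_card hsub
        simp only [Finset.card_empty, Nat.le_zero] at hle
        omega
      · -- positive literal
        have hps : pairStart m n φ p = varStartR m n φ (φ p.1 p.2).1 + 3
            + 2 * litRank m n φ p := by
          simp [pairStart, hb]
        have hrk := litRank_lt_pos m n φ p hb
        have hX := hval (Sum.inr ((φ p.1 p.2).1, true))
        have hsub : ((RV m n φ (Sum.inr ((φ p.1 p.2).1, true))).filter
            (fun t => powner t = some (Sum.inr ((φ p.1 p.2).1, true)))) ⊆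
            {⟨varStartR m n φ (φ p.1 p.2).1 + 3 + 2 * posOcc m n φ (φ p.1 p.2).1,
              by omega⟩} := by
          intro w hw
          simp only [RV, Finset.mem_filter, Finset.mem_univ, true_and] at hw
          obtain ⟨hwv, hwo⟩ := hw
          rcases hwv with h|h|h|h
          · exfalso
            have hw' : powner ⟨w.val, w.isLt⟩ = some (Sum.inl p) :=
              hall w.val w.isLt (by omega) (by omega)
            have := hwo.symm.trans hw'
            simp at this
          · exfalso
            have hw' : powner ⟨w.val, w.isLt⟩ = some (Sum.inl p) :=
              hall w.val w.isLt (by omega) (by omega)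
            have := hwo.symm.trans hw'
            simp at this
          · exfalso
            have hw' : powner ⟨w.val, w.isLt⟩ = some (Sum.inl p) :=
              hall w.val w.isLt (by omega) (by omega)
            have := hwo.symm.trans hw'
            simp at this
          · simp only [Finset.mem_singleton]
            exact Fin.ext h
        have hle := Finset.card_le_card hsub
        rw [Finset.card_singleton] at hle
        omega
    rcases hv₁ with hg₁ | hp₁
    · rcases hv₂ with hg₂ | hp₂
      · left
        refine Finset.one_lt_card_iff.mpr ⟨t₁, t₂, ?_, ?_, hne⟩
        · simp only [Finset.mem_filter, Finset.mem_univ, true_and]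
          exact ⟨hg₁, ho₁⟩
        · simp only [Finset.mem_filter, Finset.mem_univ, true_and]
          exact ⟨hg₂, ho₂⟩
      · exact (hmix t₁ t₂ hg₁.2 hp₂ ho₁ ho₂).elim
    · rcases hv₂ with hg₂ | hp₂
      · exact (hmix t₂ t₁ hg₂.2 hp₁ ho₂ ho₁).elim
      · right
        intro t ht
        have hvne : t₁.val ≠ t₂.val := fun h => hne (Fin.ext h)
        rcases hp₁ with h1|h1 <;> rcases hp₂ with h2|h2 <;> rcases ht with h|h <;>
          first
            | (have he : t = t₁ := Fin.ext (by omega); rw [he]; exact ho₁)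
            | (have he : t = t₂ := Fin.ext (by omega); rw [he]; exact ho₂)
  -- Step B
  have stepB : ∀ i : Fin m, ∃ k : Fin 3, ∀ t : Fin (10*m+5*n),
      (t.val = pairStart m n φ (i,k) ∨ t.val = pairStart m n φ (i,k) + 1) →
      powner t = some (Sum.inl (i,k)) := by
    intro i
    by_contra hno
    push_neg at hno
    set S : Fin 3 → Finset (Fin (10*m+5*n)) := fun k => Finset.univ.filter (fun t =>
        ((4*i.val ≤ t.val ∧ t.val < 4*i.val+4) ∧ powner t = some (Sum.inl (i,k)))) with hS
    have hall : ∀ k : Fin 3, 2 ≤ (S k).card := by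
      intro k
      rcases stepA (i,k) with h | h
      · exact h
      · obtain ⟨t, htc, htne⟩ := hno k
        exact absurd (h t htc) htne
    have hdisj : ∀ k k' : Fin 3, k ≠ k' → Disjoint (S k) (S k') := by
      intro k k' hkk
      rw [Finset.disjoint_left]
      intro t h1 h2
      simp only [hS, Finset.mem_filter, Finset.mem_univ, true_and] at h1 h2
      have := h1.2.symm.trans h2.2
      simp only [Option.some.injEq, Sum.inl.injEq, Prod.mk.injEq] at this
      exact hkk this.2
    have hi4 : 4*i.val+4 ≤ 10*m+5*n := by have := i.isLt; omega
    have hcardG : (Finset.univ.filter (fun t : Fin (10*m+5*n) =>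
        4*i.val ≤ t.val ∧ t.val < 4*i.val+4)).card = 4 := by
      have hG : (Finset.univ.filter (fun t : Fin (10*m+5*n) =>
          4*i.val ≤ t.val ∧ t.val < 4*i.val+4)) =
          (Finset.Ico (4*i.val) (4*i.val+4)).attachFin (fun x hx => by
            simp only [Finset.mem_Ico] at hx; omega) := by
        ext t
        simp [Finset.mem_attachFin, Finset.mem_Ico]
      rw [hG, Finset.card_attachFin]
      simp
    have hsub : S 0 ∪ S 1 ∪ S 2 ⊆ Finset.univ.filter (fun t : Fin (10*m+5*n) =>
        4*i.val ≤ t.val ∧ t.val < 4*i.val+4) := by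
      intro t ht
      simp only [hS, Finset.mem_union, Finset.mem_filter, Finset.mem_univ, true_and] at ht ⊢
      tauto
    have hcard : (S 0 ∪ S 1 ∪ S 2).card = (S 0).card + (S 1).card + (S 2).card := by
      rw [Finset.card_union_of_disjoint, Finset.card_union_of_disjoint (hdisj 0 1 (by decide))]
      exact Finset.disjoint_union_left.mpr ⟨hdisj 0 2 (by decide), hdisj 1 2 (by decide)⟩
    have hle := Finset.card_le_card hsub
    rw [hcard, hcardG] at hle
    have h0 := hall 0; have h1 := hall 1; have h2 := hall 2
    omega
  -- Step C
  have stepC : ∀ (j : Fin n) (p q : Fin m × Fin 3),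
      φ p.1 p.2 = (j, true) → φ q.1 q.2 = (j, false) →
      (∀ t : Fin (10*m+5*n), (t.val = pairStart m n φ p ∨ t.val = pairStart m n φ p + 1) →
        powner t = some (Sum.inl p)) →
      (∀ t : Fin (10*m+5*n), (t.val = pairStart m n φ q ∨ t.val = pairStart m n φ q + 1) →
        powner t = some (Sum.inl q)) → False := by
    intro j p q hp hq hP hQ
    have hjle := hvsle j
    have hple := hposle j
    have hpb : (φ p.1 p.2).2 = true := by rw [hp]
    have hpj : (φ p.1 p.2).1 = j := by rw [hp]
    have hqb : (φ q.1 q.2).2 = false := by rw [hq]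
    have hqj : (φ q.1 q.2).1 = j := by rw [hq]
    have hrp := litRank_lt_pos m n φ p hpb
    rw [hpj] at hrp
    have hrq := posOcc_add_litRank_lt m n φ q hqb
    rw [hqj] at hrq
    have hsp : pairStart m n φ p = varStartR m n φ j + 3 + 2 * litRank m n φ p := by
      simp [pairStart, hpb, hpj]
    have hsq : pairStart m n φ q = varStartR m n φ j + 4 + 2 * posOcc m n φ j
        + 2 * litRank m n φ q := by
      simp [pairStart, hqb, hqj]
    obtain ⟨t₁, t₂, ht₁, ht₂, hne⟩ := Finset.one_lt_card_iff.mp (hval (Sum.inr (j, true)))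
    simp only [RV, Finset.mem_filter, Finset.mem_univ, true_and] at ht₁ ht₂
    obtain ⟨hv₁, ho₁⟩ := ht₁
    obtain ⟨hv₂, ho₂⟩ := ht₂
    have hnotmid : ∀ t u : Fin (10*m+5*n), t.val ≤ varStartR m n φ j + 2 →
        u.val = varStartR m n φ j + 3 + 2*posOcc m n φ j →
        powner t = some (Sum.inr (j,true)) → powner u = some (Sum.inr (j,true)) → False := by
      intro t u htv huv hot hou
      have hsP : powner ⟨pairStart m n φ p, by omega⟩ = some (Sum.inl p) :=
        hP _ (Or.inl rfl)
      have hmid := hC (Sum.inr (j,true)) t.val (pairStart m n φ p) u.val t.isLt (by omega)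
        u.isLt (by omega) (by omega) hot hou
      have := hsP.symm.trans hmid
      simp at this
    have hvne : t₁.val ≠ t₂.val := fun h => hne (Fin.ext h)
    have hX1 : powner ⟨varStartR m n φ j + 1, by omega⟩ = some (Sum.inr (j,true)) := by
      rcases hv₁ with h1|h1|h1|h1 <;> rcases hv₂ with h2|h2|h2|h2 <;>
        first
          | exact (hnotmid t₁ t₂ (by omega) (by omega) ho₁ ho₂).elim
          | exact (hnotmid t₂ t₁ (by omega) (by omega) ho₂ ho₁).elim
          | exact hC _ t₁.val _ t₂.val t₁.isLt (by omega) t₂.isLt (by omega) (by omega) ho₁ ho₂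
          | exact hC _ t₂.val _ t₁.val t₂.isLt (by omega) t₁.isLt (by omega) (by omega) ho₂ ho₁
    obtain ⟨u₁, u₂, hu₁, hu₂, hne'⟩ := Finset.one_lt_card_iff.mp (hval (Sum.inr (j, false)))
    simp only [RV, Finset.mem_filter, Finset.mem_univ, true_and] at hu₁ hu₂
    obtain ⟨hw₁, hq₁⟩ := hu₁
    obtain ⟨hw₂, hq₂⟩ := hu₂
    have hvne' : u₁.val ≠ u₂.val := fun h => hne' (Fin.ext h)
    have hspan : ∀ u w : Fin (10*m+5*n), u.val ≤ varStartR m n φ j + 1 →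
        varStartR m n φ j + 1 ≤ w.val →
        powner u = some (Sum.inr (j,false)) → powner w = some (Sum.inr (j,false)) → False := by
      intro u w h1 h2 hou how
      have hmid := hC (Sum.inr (j,false)) u.val (varStartR m n φ j + 1) w.val u.isLt
        (by omega) w.isLt h1 h2 hou how
      have := hX1.symm.trans hmid
      simp at this
    have hmidend : ∀ u w : Fin (10*m+5*n),
        u.val = varStartR m n φ j + 3 + 2*posOcc m n φ j →
        w.val = varStartR m n φ j + 4 + 2*occCount m n φ j →
        powner u = some (Sum.inr (j,false)) → powner w = some (Sum.inr (j,false)) → False := by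
      intro u w h1 h2 hou how
      have hsQ : powner ⟨pairStart m n φ q, by omega⟩ = some (Sum.inl q) :=
        hQ _ (Or.inl rfl)
      have hmid := hC (Sum.inr (j,false)) u.val (pairStart m n φ q) w.val u.isLt (by omega)
        w.isLt (by omega) (by omega) hou how
      have := hsQ.symm.trans hmid
      simp at this
    rcases hw₁ with h1|h1|h1|h1 <;> rcases hw₂ with h2|h2|h2|h2 <;>
      first
        | exact hspan u₁ u₂ (by omega) (by omega) hq₁ hq₂
        | exact hspan u₂ u₁ (by omega) (by omega) hq₂ hq₁
        | exact hmidend u₁ u₂ (by omega) (by omega) hq₁ hq₂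
        | exact hmidend u₂ u₁ (by omega) (by omega) hq₂ hq₁
  -- Assemble the assignment
  refine ⟨fun j => decide (∃ p : Fin m × Fin 3, φ p.1 p.2 = (j, true) ∧
      ∀ t : Fin (10*m+5*n), (t.val = pairStart m n φ p ∨ t.val = pairStart m n φ p + 1) →
        powner t = some (Sum.inl p)), ?_⟩
  intro i
  obtain ⟨k, hk⟩ := stepB i
  refine ⟨k, ?_⟩
  cases hb : (φ i k).2
  · simp only [decide_eq_false_iff_not]
    rintro ⟨p, hp1, hp2⟩
    exact stepC (φ i k).1 p (i,k) hp1 (Prod.ext rfl hb) hp2 hk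
  · simp only [decide_eq_true_eq]
    exact ⟨(i,k), Prod.ext rfl hb, hk⟩
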